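/- Fix d odd and large, p_s with θ = 1-2p_s satisfying θ² > C''·(log d)/d for a sufficiently large constant C''. Let q_h denote the probability of incorrect reconstruction by recursive majority against an adversary at height h (root state 0, with 2 adversarial children per node fixed to 1). If q_{h-1} ≤ 1/d, then q_h ≤ 1/d. In particular, since q_0 = 0, q_h ≤ 1/d for all h ≥ 0. -/

import Mathlib

/-- Probability that Bin(n,r) = i. -/
noncomputable def binProb (n : ℕ) (r : ℝ) (i : ℕ) : ℝ :=
  (n.choose i : ℝ) * r ^ i * (1 - r) ^ (n - i)

/-- Probability that Bin(n,r) ≥ (d+1)/2. -/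
noncomputable def majTail (d n : ℕ) (r : ℝ) : ℝ :=
  ∑ j ∈ Finset.Icc ((d + 1) / 2) n, binProb n r j

/-- `qAdv d ps h` is the probability of incorrect reconstruction at height h by
recursive majority against an adversary (root state 0, 2 adversarial children per node
fixed to 1): with Z ~ Bin(d-2, 1-ps) children in state 0, and conditioned on Z = i,
Z' ~ Bin(i, 1 - q_{h-1}) of them correctly reconstructed, reconstruction succeeds if
Z' ≥ (d+1)/2. -/
noncomputable def qAdv (d : ℕ) (ps : ℝ) : ℕ → ℝ
  | 0 => 0
  | h + 1 =>
      1 - ∑ i ∈ Finset.range (d - 1), binProb (d - 2) (1 - ps) i * majTail d i (1 - qAdv d ps h)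

lemma binProb_nonneg {r : ℝ} (h0 : 0 ≤ r) (h1 : r ≤ 1) (n i : ℕ) : 0 ≤ binProb n r i := by
  unfold binProb
  have : (0:ℝ) ≤ 1 - r := by linarith
  positivity

lemma sum_weighted (n : ℕ) (r x : ℝ) :
    ∑ i ∈ Finset.range (n+1), x ^ i * binProb n r i = (r * x + (1 - r)) ^ n := by
  rw [add_pow]
  apply Finset.sum_congr rfl
  intro i _
  simp only [binProb, mul_pow]
  ring

lemma sum_binProb (n : ℕ) (r : ℝ) :
    ∑ i ∈ Finset.range (n+1), binProb n r i = 1 := by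
  have := sum_weighted n r 1
  simp only [one_pow, one_mul, mul_one] at this
  rw [this]
  norm_num

lemma lower_tail {x r : ℝ} (hx0 : 0 < x) (hx1 : x ≤ 1) (hr0 : 0 ≤ r) (hr1 : r ≤ 1)
    {m n : ℕ} (hmn : m ≤ n) :
    ∑ i ∈ Finset.range (m+1), binProb n r i ≤ (r * x + (1 - r)) ^ n / x ^ m := by
  have hb := binProb_nonneg hr0 hr1 n
  have h1 : ∀ i ∈ Finset.range (m+1), binProb n r i ≤ (x ^ i * binProb n r i) / x ^ m := by
    intro i hi
    rw [le_div_iff₀ (by positivity)]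
    have hxm : x ^ m ≤ x ^ i :=
      pow_le_pow_of_le_one hx0.le hx1 (by simpa using Nat.lt_succ_iff.mp (Finset.mem_range.mp hi))
    nlinarith [hb i]
  calc ∑ i ∈ Finset.range (m+1), binProb n r i
      ≤ ∑ i ∈ Finset.range (m+1), (x ^ i * binProb n r i) / x ^ m := Finset.sum_le_sum h1
    _ = (∑ i ∈ Finset.range (m+1), x ^ i * binProb n r i) / x ^ m := by
        rw [Finset.sum_div]
    _ ≤ (∑ i ∈ Finset.range (n+1), x ^ i * binProb n r i) / x ^ m := by
        apply div_le_div_of_nonneg_right ?_ (by positivity)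
        apply Finset.sum_le_sum_of_subset_of_nonneg (Finset.range_subset_range.mpr (by omega))
        intro i _ _
        have := hb i
        positivity
    _ = (r * x + (1 - r)) ^ n / x ^ m := by rw [sum_weighted]

lemma majTail_nonneg {r : ℝ} (h0 : 0 ≤ r) (h1 : r ≤ 1) (d n : ℕ) : 0 ≤ majTail d n r :=
  Finset.sum_nonneg fun j _ => binProb_nonneg h0 h1 n j

lemma majTail_le_one {r : ℝ} (h0 : 0 ≤ r) (h1 : r ≤ 1) (d n : ℕ) : majTail d n r ≤ 1 := by
  rw [← sum_binProb n r]
  apply Finset.sum_le_sum_of_subset_of_nonneg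
  · intro j hj
    simp only [Finset.mem_Icc] at hj
    exact Finset.mem_range.mpr (by omega)
  · intro i _ _
    exact binProb_nonneg h0 h1 n i

lemma one_sub_majTail {d i : ℕ} (h : (d+1)/2 ≤ i) (r : ℝ) :
    1 - majTail d i r = ∑ j ∈ Finset.range ((d+1)/2), binProb i r j := by
  have hsplit : (∑ j ∈ Finset.Ico 0 ((d+1)/2), binProb i r j)
      + ∑ j ∈ Finset.Ico ((d+1)/2) (i+1), binProb i r j
      = ∑ j ∈ Finset.Ico 0 (i+1), binProb i r j :=
    Finset.sum_Ico_consecutive _ (by omega) (by omega)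
  have h1 : ∑ j ∈ Finset.range (i+1), binProb i r j = 1 := sum_binProb i r
  have h2 : majTail d i r = ∑ j ∈ Finset.Ico ((d+1)/2) (i+1), binProb i r j := by
    unfold majTail
    rw [Finset.Ico_add_one_right_eq_Icc]
  rw [← h2, ← Finset.range_eq_Ico, ← Finset.range_eq_Ico] at hsplit
  linarith [hsplit, h1]

lemma qAdv_mem {d : ℕ} (hd : 2 ≤ d) {ps : ℝ} (h0 : 0 ≤ ps) (h1 : ps ≤ 1) :
    ∀ h, 0 ≤ qAdv d ps h ∧ qAdv d ps h ≤ 1 := by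
  intro h
  induction h with
  | zero => simp [qAdv]
  | succ h ih =>
    have hr0 : (0:ℝ) ≤ 1 - ps := by linarith
    have hr1 : (1:ℝ) - ps ≤ 1 := by linarith
    have hq0 : (0:ℝ) ≤ 1 - qAdv d ps h := by linarith [ih.2]
    have hq1 : (1:ℝ) - qAdv d ps h ≤ 1 := by linarith [ih.1]
    have hS0 : 0 ≤ ∑ i ∈ Finset.range (d - 1),
        binProb (d - 2) (1 - ps) i * majTail d i (1 - qAdv d ps h) := by
      apply Finset.sum_nonneg
      intro i _
      exact mul_nonneg (binProb_nonneg hr0 hr1 _ _) (majTail_nonneg hq0 hq1 _ _)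
    have hS1 : ∑ i ∈ Finset.range (d - 1),
        binProb (d - 2) (1 - ps) i * majTail d i (1 - qAdv d ps h) ≤ 1 := by
      calc ∑ i ∈ Finset.range (d - 1),
            binProb (d - 2) (1 - ps) i * majTail d i (1 - qAdv d ps h)
          ≤ ∑ i ∈ Finset.range (d - 1), binProb (d - 2) (1 - ps) i := by
            apply Finset.sum_le_sum
            intro i _
            have hb := binProb_nonneg hr0 hr1 (d-2) i
            nlinarith [majTail_le_one hq0 hq1 d i, majTail_nonneg hq0 hq1 d i]
        _ = 1 := by
            have : d - 1 = (d - 2) + 1 := by omega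
            rw [this]; exact sum_binProb _ _
    constructor
    · show 0 ≤ 1 - _
      linarith
    · show 1 - _ ≤ 1
      linarith

lemma sixtyfour : ∀ L, 12 ≤ L → 64 * L ≤ 2 ^ L := by
  intro L hL
  induction L with
  | zero => omega
  | succ n ih =>
    rcases Nat.lt_or_ge n 12 with h | h
    · have hn : n = 11 := by omega
      subst hn; norm_num
    · have h1 := ih h
      have h2 : 64 ≤ 2^n := le_trans (by norm_num : 64 ≤ 2^6) (Nat.pow_le_pow_right (by norm_num) (by omega))
      rw [pow_succ]
      omega

set_option maxHeartbeats 2000000 in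
lemma step_main {d : ℕ} (hd : 2^20 ≤ d) (hodd : Odd d) {ps : ℝ}
    (hps0 : 0 ≤ ps) (hps1 : ps ≤ 1/2)
    (hth : (1 - 2*ps)^2 > 100 * Real.log d / d)
    {q : ℝ} (hq0 : 0 ≤ q) (hq : q ≤ 1/(d:ℝ)) :
    ∑ i ∈ Finset.range (d-1), binProb (d-2) (1-ps) i * (1 - majTail d i (1 - q)) ≤ 1/(d:ℝ) := by
  obtain ⟨L, hLdef⟩ : ∃ L, Nat.log 2 d = L := ⟨_, rfl⟩
  obtain ⟨c, hcdef⟩ : ∃ c, (d+1)/2 = c := ⟨_, rfl⟩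
  set m := c + L + 7 with hmdef
  have hc2 : 2*c = d + 1 := by obtain ⟨j, hj⟩ := hodd; omega
  have h2L : 2^L ≤ d := hLdef ▸ Nat.pow_log_le_self 2 (by omega)
  have hdL : d < 2^(L+1) := hLdef ▸ Nat.lt_pow_succ_log_self (by norm_num) d
  have hL20 : 20 ≤ L := by
    have h := Nat.log_mono_right (b := 2) hd
    rw [Nat.log_pow (by norm_num), hLdef] at h
    exact h
  have hLd : 64 * L ≤ d := le_trans (sixtyfour L (by omega)) h2L
  have hmd : m + 2 ≤ d := by omega
  -- real facts
  have hD0 : (0:ℝ) < d := by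
    have : 0 < d := by omega
    exact_mod_cast this
  have hD : (1048576:ℝ) ≤ d := by
    have : 1048576 ≤ d := by omega
    exact_mod_cast this
  have hsq : (1000:ℝ) ≤ Real.sqrt d := by
    have h := Real.sqrt_le_sqrt (x := (1000:ℝ)^2) (y := d) (by nlinarith)
    rwa [Real.sqrt_sq (by norm_num)] at h
  have hsq2 : Real.sqrt d * Real.sqrt d = d := Real.mul_self_sqrt (by linarith)
  have hlog_pos : (0:ℝ) < Real.log d := Real.log_pos (by linarith)
  have hlog1 : (1:ℝ) ≤ Real.log d := by
    rw [Real.le_log_iff_exp_le (by linarith)]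
    nlinarith [Real.exp_one_lt_d9]
  have hlogd : Real.log d ≤ (d:ℝ)/500 := by
    have h1 : Real.log (Real.sqrt d) = Real.log d / 2 := Real.log_sqrt (by linarith)
    have h2 : Real.log (Real.sqrt d) ≤ Real.sqrt d - 1 :=
      Real.log_le_sub_one_of_pos (by linarith)
    nlinarith [hsq, hsq2]
  have hLreal : (L:ℝ) ≤ 1.45 * Real.log d := by
    have h1 : ((2:ℝ))^L ≤ d := by exact_mod_cast h2L
    have h2 : Real.log ((2:ℝ)^L) ≤ Real.log d := Real.log_le_log (by positivity) h1
    rw [Real.log_pow] at h2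
    nlinarith [Real.log_two_gt_d9, (Nat.cast_nonneg L : (0:ℝ) ≤ L), hlog_pos]
  have hq1 : q ≤ 1 := le_trans hq (by rw [div_le_one hD0]; linarith)
  have hr0 : (0:ℝ) ≤ 1 - q := by linarith
  have hr1 : (1:ℝ) - q ≤ 1 := by linarith
  have hp0 : (0:ℝ) ≤ 1 - ps := by linarith
  have hp1 : (1:ℝ) - ps ≤ 1 := by linarith
  -- Part A : Chernoff for the outer binomial
  have partA : ∑ i ∈ Finset.range m, binProb (d-2) (1-ps) i ≤ 1/(2*(d:ℝ)) := by
    have hmm : m - 1 + 1 = m := by omega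
    rcases le_or_gt ps (1/4) with hcase | hcase
    · -- ps ≤ 1/4 : take x = 1/3
      have htail := lower_tail (x := (1/3:ℝ)) (by norm_num) (by norm_num) hp0 hp1
        (m := m-1) (n := d-2) (by omega)
      rw [hmm] at htail
      refine le_trans htail ?_
      have hbase0 : (0:ℝ) ≤ (1-ps)*(1/3) + (1-(1-ps)) := by nlinarith
      have hbase : (1-ps)*(1/3:ℝ) + (1-(1-ps)) ≤ 1/2 := by nlinarith
      have h1 : ((1-ps)*(1/3:ℝ) + (1-(1-ps)))^(d-2) ≤ (1/2:ℝ)^(d-2) :=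
        pow_le_pow_left₀ hbase0 hbase _
      -- numeric core : 3^(m-1) * (1/2)^(d-2) ≤ 1/(2d)
      have e9 : (9:ℝ)^L ≤ (d:ℝ)^4 := by
        have h2L' : (2:ℝ)^L ≤ d := by exact_mod_cast h2L
        calc (9:ℝ)^L ≤ (16:ℝ)^L := pow_le_pow_left₀ (by norm_num) (by norm_num) L
          _ = ((2:ℝ)^L)^4 := by
              rw [← pow_mul, show (16:ℝ) = 2^4 by norm_num, ← pow_mul]
              ring_nf
          _ ≤ (d:ℝ)^4 := pow_le_pow_left₀ (by positivity) h2L' 4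
      have hq14 : Real.exp (1/4:ℝ) ≤ 4/3 := by
        have h4 : (Real.exp (1/4:ℝ))^(4:ℕ) = Real.exp 1 := by
          rw [← Real.exp_nat_mul]; norm_num
        by_contra hcon
        push_neg at hcon
        have h5 : (4/3:ℝ)^(4:ℕ) ≤ (Real.exp (1/4:ℝ))^(4:ℕ) :=
          pow_le_pow_left₀ (by norm_num) hcon.le 4
        rw [h4] at h5
        nlinarith [Real.exp_one_lt_d9]
      have hd2 : ((d-2:ℕ):ℝ) = (d:ℝ) - 2 := by
        have h2d : (2:ℕ) ≤ d := by omega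
        push_cast [Nat.cast_sub h2d]
        ring
      have e43 : (d:ℝ)^8 ≤ (4/3:ℝ)^(d-2) := by
        have hlogpow : (d:ℝ)^8 = Real.exp (8 * Real.log d) := by
          rw [show (8:ℝ)*Real.log d = ((8:ℕ):ℝ)*Real.log d by norm_num, ← Real.log_pow,
            Real.exp_log (by positivity)]
        calc (d:ℝ)^8 = Real.exp (8 * Real.log d) := hlogpow
          _ ≤ Real.exp (((d-2:ℕ):ℝ) * (1/4)) := by
              apply Real.exp_le_exp.mpr
              rw [hd2]
              nlinarith [hlogd, hD]
          _ = Real.exp (1/4) ^ (d-2) := Real.exp_nat_mul _ _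
          _ ≤ (4/3:ℝ)^(d-2) := pow_le_pow_left₀ (Real.exp_pos _).le hq14 _
      have h2m : 2*(m-1) = (d-2) + (2*L+15) := by omega
      have key : (3:ℝ)^(2*(m-1)) * (2*(d:ℝ))^2 ≤ (2:ℝ)^(2*(d-2)) := by
        have ha : (3:ℝ)^(2*(m-1)) = 3^(d-2) * ((9:ℝ)^L * 3^15) := by
          rw [h2m, pow_add, pow_add, pow_mul]
          norm_num
        have hb4 : (2:ℝ)^(2*(d-2)) = 3^(d-2) * (4/3:ℝ)^(d-2) := by
          rw [pow_mul, ← mul_pow]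
          norm_num
        rw [ha, hb4]
        calc (3:ℝ)^(d-2) * ((9:ℝ)^L * 3^15) * (2*(d:ℝ))^2
            = (3:ℝ)^(d-2) * ((9:ℝ)^L * 3^15 * (2*(d:ℝ))^2) := by ring
          _ ≤ (3:ℝ)^(d-2) * (d:ℝ)^8 := by
              apply mul_le_mul_of_nonneg_left ?_ (by positivity)
              have t1 : (9:ℝ)^L * 3^15 * (2*(d:ℝ))^2 ≤ (d:ℝ)^4 * 3^15 * (2*(d:ℝ))^2 := by
                apply mul_le_mul_of_nonneg_right
                  (mul_le_mul_of_nonneg_right e9 (by norm_num)) (by positivity)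
              have t2 : (d:ℝ)^4 * 3^15 * (2*(d:ℝ))^2 = ((3:ℝ)^15*4) * (d:ℝ)^6 := by ring
              have t3 : ((3:ℝ)^15*4) * (d:ℝ)^6 ≤ (d:ℝ)^2 * (d:ℝ)^6 := by
                apply mul_le_mul_of_nonneg_right ?_ (by positivity)
                nlinarith [hD]
              have t4 : (d:ℝ)^2 * (d:ℝ)^6 = (d:ℝ)^8 := by ring
              linarith
          _ ≤ (3:ℝ)^(d-2) * (4/3:ℝ)^(d-2) := mul_le_mul_of_nonneg_left e43 (by positivity)
      have main : (3:ℝ)^(m-1) * (1/2:ℝ)^(d-2) ≤ 1/(2*(d:ℝ)) := by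
        have hL' : (0:ℝ) ≤ (3:ℝ)^(m-1) * (1/2:ℝ)^(d-2) := by positivity
        have hR' : (0:ℝ) ≤ 1/(2*(d:ℝ)) := by positivity
        have hsquare : ((3:ℝ)^(m-1) * (1/2:ℝ)^(d-2))^2 ≤ (1/(2*(d:ℝ)))^2 := by
          have lhs_eq : ((3:ℝ)^(m-1) * (1/2:ℝ)^(d-2))^2
              = (3:ℝ)^(2*(m-1)) / (2:ℝ)^(2*(d-2)) := by
            rw [mul_pow, ← pow_mul, ← pow_mul, div_pow, one_pow]
            rw [Nat.mul_comm (m-1) 2, Nat.mul_comm (d-2) 2]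
            ring
          have rhs_eq : (1/(2*(d:ℝ)))^2 = 1 / (2*(d:ℝ))^2 := by
            rw [div_pow, one_pow]
          rw [lhs_eq, rhs_eq, div_le_div_iff₀ (by positivity) (by positivity)]
          calc (3:ℝ)^(2*(m-1)) * (2*(d:ℝ))^2 ≤ (2:ℝ)^(2*(d-2)) := key
            _ = 1 * (2:ℝ)^(2*(d-2)) := by ring
        exact (pow_le_pow_iff_left₀ hL' hR' (by norm_num)).mp hsquare
      have hdiv : ((1/3:ℝ))^(m-1) = 1/(3:ℝ)^(m-1) := by rw [div_pow, one_pow]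
      rw [hdiv, one_div ((3:ℝ)^(m-1)), div_eq_mul_inv, inv_inv]
      calc ((1-ps)*(1/3:ℝ) + (1-(1-ps)))^(d-2) * (3:ℝ)^(m-1)
          ≤ (1/2:ℝ)^(d-2) * (3:ℝ)^(m-1) :=
            mul_le_mul_of_nonneg_right h1 (by positivity)
        _ = (3:ℝ)^(m-1) * (1/2:ℝ)^(d-2) := by ring
        _ ≤ 1/(2*(d:ℝ)) := main
    · -- 1/4 < ps : take x = ps/(1-ps)
      have h1ps : (0:ℝ) < 1 - ps := by linarith
      have hps_pos : (0:ℝ) < ps := by linarith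
      have hxpos : (0:ℝ) < ps/(1-ps) := by positivity
      have hxle : ps/(1-ps) ≤ 1 := by rw [div_le_one h1ps]; linarith
      have htail := lower_tail (x := ps/(1-ps)) hxpos hxle hp0 hp1
        (m := m-1) (n := d-2) (by omega)
      rw [hmm] at htail
      refine le_trans htail ?_
      have hxval : (1-ps)*(ps/(1-ps)) + (1-(1-ps)) = 2*ps := by field_simp; ring
      rw [hxval]
      have hflip : (((ps/(1-ps))^(m-1) : ℝ))⁻¹ = ((1-ps)/ps)^(m-1) := by
        rw [← inv_pow, inv_div]
      rw [div_eq_mul_inv, hflip]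
      obtain ⟨N, hN⟩ : ∃ N, d - 2 = (m-1) + N := ⟨(d-2)-(m-1), by omega⟩
      have hm1 : m - 1 = N + (2*L+15) := by omega
      have e1 : ((2:ℝ)*ps)^(d-2) = (2*ps)^(m-1) * (2*ps)^N := by rw [hN, pow_add]
      have e2 : ((1-ps)/ps)^(m-1) * (2*ps)^(m-1) = (2*(1-ps))^(m-1) := by
        rw [← mul_pow]
        congr 1
        field_simp
      have e3 : ((2:ℝ)*ps)^(d-2) * ((1-ps)/ps)^(m-1)
          = ((2*(1-ps))*(2*ps))^N * (2*(1-ps))^(2*L+15) := by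
        rw [e1]
        calc (2*ps)^(m-1) * (2*ps)^N * ((1-ps)/ps)^(m-1)
            = (((1-ps)/ps)^(m-1) * (2*ps)^(m-1)) * (2*ps)^N := by ring
          _ = (2*(1-ps))^(m-1) * (2*ps)^N := by rw [e2]
          _ = (2*(1-ps))^(N+(2*L+15)) * (2*ps)^N := by rw [hm1]
          _ = ((2*(1-ps))*(2*ps))^N * (2*(1-ps))^(2*L+15) := by
              rw [pow_add ((2:ℝ)*(1-ps)) N (2*L+15), mul_pow ((2:ℝ)*(1-ps)) ((2:ℝ)*ps) N]
              ring
      rw [e3]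
      have hθ0 : (0:ℝ) ≤ 1 - 2*ps := by linarith
      have hprod : (2*(1-ps))*(2*ps) = 1 - (1-2*ps)^2 := by ring
      have hprod0 : (0:ℝ) ≤ (2*(1-ps))*(2*ps) := by nlinarith
      have hexp1 : (2*(1-ps))*(2*ps) ≤ Real.exp (-((1-2*ps)^2)) := by
        have := Real.add_one_le_exp (-((1-2*ps)^2))
        rw [hprod]
        linarith
      have hb1 : ((2*(1-ps))*(2*ps))^N ≤ Real.exp ((N:ℝ) * (-((1-2*ps)^2))) := by
        rw [Real.exp_nat_mul]
        exact pow_le_pow_left₀ hprod0 hexp1 N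
      have h32e : (3/2:ℝ) ≤ Real.exp (1/2) := by
        have h : (Real.exp (1/2:ℝ))^(2:ℕ) = Real.exp 1 := by
          rw [← Real.exp_nat_mul]; norm_num
        nlinarith [Real.exp_one_gt_d9, Real.exp_pos (1/2:ℝ)]
      have hb2 : (2*(1-ps))^(2*L+15) ≤ Real.exp (((2*L+15:ℕ):ℝ) * (1/2:ℝ)) := by
        rw [Real.exp_nat_mul]
        exact pow_le_pow_left₀ (by linarith) (le_trans (by linarith) h32e) _
      have h4N : d ≤ 4*N := by omega
      have hNval : (d:ℝ)/4 ≤ (N:ℝ) := by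
        have : (d:ℝ) ≤ 4*(N:ℝ) := by exact_mod_cast h4N
        linarith
      have hkey : 25 * Real.log d ≤ (N:ℝ) * (1-2*ps)^2 := by
        have t1 : ((d:ℝ)/4) * (1-2*ps)^2 ≤ (N:ℝ)*(1-2*ps)^2 :=
          mul_le_mul_of_nonneg_right hNval (sq_nonneg _)
        have t2 : ((d:ℝ)/4) * (100*Real.log d/(d:ℝ)) ≤ ((d:ℝ)/4) * (1-2*ps)^2 :=
          mul_le_mul_of_nonneg_left hth.le (by positivity)
        have t3 : ((d:ℝ)/4)*(100*Real.log d/(d:ℝ)) = 25*Real.log d := by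
          field_simp
          ring
        linarith
      have hfinal : Real.exp ((N:ℝ) * (-((1-2*ps)^2))) * Real.exp (((2*L+15:ℕ):ℝ) * (1/2:ℝ))
          ≤ 1/(2*(d:ℝ)) := by
        rw [← Real.exp_add]
        rw [show (1:ℝ)/(2*(d:ℝ)) = Real.exp (Real.log (1/(2*(d:ℝ)))) from
          (Real.exp_log (by positivity)).symm]
        apply Real.exp_le_exp.mpr
        have hlog2d : Real.log (1/(2*(d:ℝ))) = -(Real.log 2 + Real.log d) := by
          rw [one_div, Real.log_inv, Real.log_mul (by norm_num) (ne_of_gt hD0)]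
        rw [hlog2d]
        push_cast
        nlinarith [hkey, hLreal, hlog1, Real.log_two_lt_d9]
      calc ((2*(1-ps))*(2*ps))^N * (2*(1-ps))^(2*L+15)
          ≤ Real.exp ((N:ℝ)*(-((1-2*ps)^2))) * Real.exp (((2*L+15:ℕ):ℝ) * (1/2:ℝ)) :=
            mul_le_mul hb1 hb2 (pow_nonneg (by linarith) _) (by positivity)
        _ ≤ 1/(2*(d:ℝ)) := hfinal
  -- Part B : per-index inner bound
  have partB : ∀ i ∈ Finset.Ico m (d-1), 1 - majTail d i (1 - q) ≤ 1/(2*(d:ℝ)) := by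
    have he1 : (2.7182818283:ℝ) < Real.exp 1 := Real.exp_one_gt_d9
    have hepos : (0:ℝ) < Real.exp 1 := Real.exp_pos 1
    have hecan : Real.exp 1 * (Real.exp 1)⁻¹ = 1 := mul_inv_cancel₀ (ne_of_gt hepos)
    have hxp : (0:ℝ) < (Real.exp 1)⁻¹ := inv_pos.mpr hepos
    have hxv : (Real.exp 1)⁻¹ ≤ 0.368 := by nlinarith
    have hx1 : (Real.exp 1)⁻¹ ≤ 1 := by nlinarith
    have hdinv : 1/(d:ℝ) ≤ 0.000001 := by
      rw [div_le_iff₀ hD0]; nlinarith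
    have hbase : (Real.exp 1)⁻¹ + 1/(d:ℝ) ≤ 1/2 := by linarith
    have hB0 : (0:ℝ) ≤ (Real.exp 1)⁻¹ + 1/(d:ℝ) := by positivity
    have hexpe16 : Real.exp (Real.exp 1) ≤ 16 := by
      have h1 : Real.exp 1 ≤ 4 * Real.log 2 := by
        nlinarith [Real.log_two_gt_d9, Real.exp_one_lt_d9]
      calc Real.exp (Real.exp 1) ≤ Real.exp (4 * Real.log 2) := Real.exp_le_exp.mpr h1
        _ = Real.exp (Real.log 2) ^ (4:ℕ) := by
            rw [← Real.exp_nat_mul]; norm_num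
        _ = 2 ^ (4:ℕ) := by rw [Real.exp_log (by norm_num : (0:ℝ) < 2)]
        _ ≤ 16 := by norm_num
    intro i hi
    rw [Finset.mem_Ico] at hi
    rw [one_sub_majTail (by omega : (d+1)/2 ≤ i), hcdef]
    have hcc : c - 1 + 1 = c := by omega
    have htail := lower_tail (x := (Real.exp 1)⁻¹) hxp hx1 hr0 hr1 (m := c-1) (n := i) (by omega)
    rw [hcc] at htail
    refine le_trans htail ?_
    rw [div_eq_mul_inv, inv_pow, inv_inv]
    set A := (1-q) * (Real.exp 1)⁻¹ + (1 - (1-q)) with hAdef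
    have hA0 : 0 ≤ A := by
      rw [hAdef]; nlinarith
    have hAle : A ≤ (Real.exp 1)⁻¹ + 1/(d:ℝ) := by
      rw [hAdef]; nlinarith
    have hstep1 : A ^ i ≤ ((Real.exp 1)⁻¹ + 1/(d:ℝ)) ^ i := pow_le_pow_left₀ hA0 hAle i
    have hstep2 : ((Real.exp 1)⁻¹ + 1/(d:ℝ)) ^ i ≤ ((Real.exp 1)⁻¹ + 1/(d:ℝ)) ^ m :=
      pow_le_pow_of_le_one hB0 (by linarith) hi.1
    have key1 : ((Real.exp 1)⁻¹ + 1/(d:ℝ)) ^ (c-1) * (Real.exp 1)^(c-1)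
        = (1 + Real.exp 1 / d) ^ (c-1) := by
      rw [← mul_pow]
      congr 1
      field_simp
    have key2 : (1 + Real.exp 1 / (d:ℝ)) ^ (c-1) ≤ 16 := by
      have h1 : (1:ℝ) + Real.exp 1 / d ≤ Real.exp (Real.exp 1 / d) := by
        have := Real.add_one_le_exp (Real.exp 1 / d); linarith
      have h2 : (1 + Real.exp 1 / (d:ℝ)) ^ (c-1) ≤ Real.exp (Real.exp 1 / d) ^ (c-1) :=
        pow_le_pow_left₀ (by positivity) h1 _
      have h3 : Real.exp (Real.exp 1 / d) ^ (c-1) = Real.exp (((c-1:ℕ):ℝ) * (Real.exp 1 / d)) := by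
        rw [Real.exp_nat_mul]
      have hcd : ((c-1:ℕ):ℝ) ≤ d := by exact_mod_cast (by omega : c - 1 ≤ d)
      have h4 : ((c-1 : ℕ):ℝ) * (Real.exp 1 / d) ≤ Real.exp 1 := by
        have h5 : ((c-1:ℕ):ℝ) * (Real.exp 1 / d) ≤ (d:ℝ) * (Real.exp 1 / d) :=
          mul_le_mul_of_nonneg_right hcd (by positivity)
        have h6 : (d:ℝ) * (Real.exp 1 / d) = Real.exp 1 := by
          field_simp
        linarith
      calc (1 + Real.exp 1 / (d:ℝ)) ^ (c-1) ≤ Real.exp (Real.exp 1 / d) ^ (c-1) := h2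
        _ = Real.exp (((c-1:ℕ):ℝ) * (Real.exp 1 / d)) := h3
        _ ≤ Real.exp (Real.exp 1) := Real.exp_le_exp.mpr h4
        _ ≤ 16 := hexpe16
    have key3 : ((Real.exp 1)⁻¹ + 1/(d:ℝ)) ^ (L+8) ≤ 1/(128*(d:ℝ)) := by
      have h1 : ((Real.exp 1)⁻¹ + 1/(d:ℝ)) ^ (L+8) ≤ (1/2:ℝ)^(L+8) :=
        pow_le_pow_left₀ hB0 hbase _
      have h3 : (128:ℝ)*d ≤ 2^(L+8) := by
        have hdc : (d:ℝ) < 2^(L+1) := by exact_mod_cast hdL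
        have e1 : (2:ℝ)^(L+8) = 2^(L+1) * 2^7 := by rw [← pow_add]
        nlinarith [pow_pos (by norm_num : (0:ℝ) < 2) (L+1)]
      calc ((Real.exp 1)⁻¹ + 1/(d:ℝ)) ^ (L+8) ≤ (1/2:ℝ)^(L+8) := h1
        _ = 1/((2:ℝ)^(L+8)) := by rw [div_pow, one_pow]
        _ ≤ 1/(128*(d:ℝ)) := one_div_le_one_div_of_le (by positivity) h3
    have hmsplit : m = (c-1) + (L+8) := by omega
    calc A ^ i * Real.exp 1 ^ (c-1)
        ≤ ((Real.exp 1)⁻¹ + 1/(d:ℝ)) ^ m * Real.exp 1 ^ (c-1) :=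
          mul_le_mul_of_nonneg_right (le_trans hstep1 hstep2) (by positivity)
      _ = ((1 + Real.exp 1 / d) ^ (c-1)) * (((Real.exp 1)⁻¹ + 1/(d:ℝ)) ^ (L+8)) := by
          rw [hmsplit, pow_add, ← key1]; ring
      _ ≤ 16 * (1/(128*(d:ℝ))) :=
          mul_le_mul key2 key3 (by positivity) (by norm_num)
      _ ≤ 1/(2*(d:ℝ)) := by
          rw [show (16:ℝ) * (1/(128*(d:ℝ))) = 1/(8*(d:ℝ)) by field_simp; ring]
          exact one_div_le_one_div_of_le (by positivity) (by nlinarith)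
  -- assembly
  have hb := binProb_nonneg hp0 hp1 (d-2)
  have hsplit : (∑ i ∈ Finset.Ico 0 m, binProb (d-2) (1-ps) i * (1 - majTail d i (1 - q)))
      + ∑ i ∈ Finset.Ico m (d-1), binProb (d-2) (1-ps) i * (1 - majTail d i (1 - q))
      = ∑ i ∈ Finset.Ico 0 (d-1), binProb (d-2) (1-ps) i * (1 - majTail d i (1 - q)) :=
    Finset.sum_Ico_consecutive _ (by omega) (by omega)
  rw [← Finset.range_eq_Ico, ← Finset.range_eq_Ico] at hsplit
  have hA : ∑ i ∈ Finset.range m, binProb (d-2) (1-ps) i * (1 - majTail d i (1 - q))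
      ≤ 1/(2*(d:ℝ)) := by
    refine le_trans (Finset.sum_le_sum (fun i _ => ?_)) partA
    have hs0 := majTail_nonneg hr0 hr1 d i
    nlinarith [hb i]
  have hB : ∑ i ∈ Finset.Ico m (d-1), binProb (d-2) (1-ps) i * (1 - majTail d i (1 - q))
      ≤ 1/(2*(d:ℝ)) := by
    have step1 : ∑ i ∈ Finset.Ico m (d-1), binProb (d-2) (1-ps) i * (1 - majTail d i (1 - q))
        ≤ ∑ i ∈ Finset.Ico m (d-1), binProb (d-2) (1-ps) i * (1/(2*(d:ℝ))) := by
      apply Finset.sum_le_sum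
      intro i hi
      exact mul_le_mul_of_nonneg_left (partB i hi) (hb i)
    have step2 : ∑ i ∈ Finset.Ico m (d-1), binProb (d-2) (1-ps) i ≤ 1 := by
      have h1 : ∑ i ∈ Finset.range ((d-2)+1), binProb (d-2) (1-ps) i = 1 := sum_binProb _ _
      rw [show (d-2)+1 = d-1 by omega] at h1
      refine le_trans ?_ h1.le
      apply Finset.sum_le_sum_of_subset_of_nonneg
      · rw [Finset.range_eq_Ico]
        exact Finset.Ico_subset_Ico (by omega) le_rfl
      · intro i _ _
        exact hb i
    rw [← Finset.sum_mul] at step1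
    have step3 : (∑ i ∈ Finset.Ico m (d-1), binProb (d-2) (1-ps) i) * (1/(2*(d:ℝ)))
        ≤ 1 * (1/(2*(d:ℝ))) := mul_le_mul_of_nonneg_right step2 (by positivity)
    linarith
  have hhalf : 1/(2*(d:ℝ)) + 1/(2*(d:ℝ)) = 1/(d:ℝ) := by
    field_simp
    norm_num
  linarith [hA, hB, hsplit]

/-- For d odd and large and θ = 1-2p_s with θ² > C''·(log d)/d for
sufficiently large C'', if q_{h-1} ≤ 1/d then q_h ≤ 1/d; in particular, since q_0 = 0,
q_h ≤ 1/d for all h. -/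
theorem stmt13 :
    ∃ C : ℝ, 0 < C ∧ ∃ d₀ : ℕ, ∀ d : ℕ, d₀ ≤ d → Odd d →
      ∀ ps : ℝ, 0 ≤ ps → ps ≤ 1/2 → (1 - 2 * ps) ^ 2 > C * Real.log d / d →
        (∀ h : ℕ, qAdv d ps h ≤ 1 / d → qAdv d ps (h + 1) ≤ 1 / d) ∧
        (∀ h : ℕ, qAdv d ps h ≤ 1 / d) := by
  refine ⟨100, by norm_num, 2^20, ?_⟩
  intro d hd hodd ps hps0 hps1 hth
  have hD0 : (0:ℝ) < d := by
    have : 0 < d := by omega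
    exact_mod_cast this
  have hstep : ∀ h : ℕ, qAdv d ps h ≤ 1 / d → qAdv d ps (h + 1) ≤ 1 / d := by
    intro h hq
    have hq0 : 0 ≤ qAdv d ps h := (qAdv_mem (by omega) hps0 (by linarith) h).1
    have hrw : qAdv d ps (h+1)
        = 1 - ∑ i ∈ Finset.range (d - 1),
            binProb (d-2) (1-ps) i * majTail d i (1 - qAdv d ps h) := rfl
    have hsum1 : ∑ i ∈ Finset.range (d-1), binProb (d-2) (1-ps) i = 1 := by
      rw [show d - 1 = (d-2)+1 by omega]
      exact sum_binProb _ _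
    have heq : qAdv d ps (h+1)
        = ∑ i ∈ Finset.range (d-1),
            binProb (d-2) (1-ps) i * (1 - majTail d i (1 - qAdv d ps h)) := by
      rw [hrw]
      have hdist : ∑ i ∈ Finset.range (d-1),
          binProb (d-2) (1-ps) i * (1 - majTail d i (1 - qAdv d ps h))
          = (∑ i ∈ Finset.range (d-1), binProb (d-2) (1-ps) i)
            - ∑ i ∈ Finset.range (d-1),
                binProb (d-2) (1-ps) i * majTail d i (1 - qAdv d ps h) := by
        rw [← Finset.sum_sub_distrib]
        apply Finset.sum_congr rfl
        intro i _
        ring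
      rw [hdist, hsum1]
    rw [heq]
    exact step_main hd hodd hps0 hps1 hth hq0 hq
  refine ⟨hstep, ?_⟩
  intro h
  induction h with
  | zero =>
    have : qAdv d ps 0 = 0 := rfl
    rw [this]
    positivity
  | succ n ih => exact hstep n ih
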